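/- If X is a metrizable topological space and Γ is a countable subgroup of the homeomorphism group of X, then there exists a metric δ on X compatible with the topology of X such that every element of Γ is a bi-Lipschitz homeomorphism of (X, δ). -/
import Mathlib

open scoped Pointwise

section Aux
variable {G : Type*} [Group G]

def TTset (e : ℕ → G) (n : ℕ) : Set G :=
  {1} ∪ e '' Set.Iic n ∪ (fun k => (e k)⁻¹) '' Set.Iic n

def AAset (e : ℕ → G) : ℕ → Set G
  | 0 => {1}
  | n + 1 => AAset e n * TTset e n

lemma one_mem_TTset (e : ℕ → G) (n : ℕ) : (1 : G) ∈ TTset e n :=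
  Or.inl (Or.inl rfl)

lemma TTset_mono (e : ℕ → G) {m n : ℕ} (h : m ≤ n) : TTset e m ⊆ TTset e n := by
  intro a ha
  rcases ha with (h1 | ⟨k, hk, rfl⟩) | ⟨k, hk, rfl⟩
  · exact Or.inl (Or.inl h1)
  · exact Or.inl (Or.inr ⟨k, le_trans hk h, rfl⟩)
  · exact Or.inr ⟨k, le_trans hk h, rfl⟩

lemma TTset_finite (e : ℕ → G) (n : ℕ) : (TTset e n).Finite :=
  (((Set.finite_singleton 1).union ((Set.finite_Iic n).image e)).union
    ((Set.finite_Iic n).image _))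

lemma AAset_finite (e : ℕ → G) : ∀ n, (AAset e n).Finite
  | 0 => Set.finite_singleton 1
  | n + 1 => (AAset_finite e n).mul (TTset_finite e n)

lemma one_mem_AAset (e : ℕ → G) : ∀ n, (1 : G) ∈ AAset e n
  | 0 => rfl
  | n + 1 => by
    have := Set.mul_mem_mul (one_mem_AAset e n) (one_mem_TTset e n)
    rw [mul_one] at this
    exact this

lemma AAset_subset_succ (e : ℕ → G) (n : ℕ) : AAset e n ⊆ AAset e (n + 1) := by
  intro a ha
  have := Set.mul_mem_mul ha (one_mem_TTset e n)
  rw [mul_one] at this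
  exact this

lemma AAset_mono (e : ℕ → G) {m n : ℕ} (h : m ≤ n) : AAset e m ⊆ AAset e n := by
  induction h with
  | refl => exact subset_rfl
  | step _ ih => exact ih.trans (AAset_subset_succ e _)

lemma AAset_mul (e : ℕ → G) :
    ∀ n, ∀ {m : ℕ} {a b : G}, a ∈ AAset e m → b ∈ AAset e n → a * b ∈ AAset e (m + n)
  | 0, m, a, b, ha, hb => by
    have hb' : b = 1 := hb
    subst hb'
    rw [mul_one]
    exact ha
  | n + 1, m, a, b, ha, hb => by
    rcases hb with ⟨b', hb', t, ht, rfl⟩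
    have h1 : a * b' ∈ AAset e (m + n) := AAset_mul e n ha hb'
    show a * (b' * t) ∈ AAset e (m + n) * TTset e (m + n)
    rw [← mul_assoc]
    exact Set.mul_mem_mul h1 (TTset_mono e (Nat.le_add_left n m) ht)

lemma apply_mem_AAset (e : ℕ → G) (k : ℕ) : e k ∈ AAset e (k + 1) := by
  have h : e k ∈ TTset e k := Or.inl (Or.inr ⟨k, le_refl k, rfl⟩)
  have := Set.mul_mem_mul (one_mem_AAset e k) h
  rw [one_mul] at this
  exact this

end Aux

/-- The group of self-homeomorphisms of `X`, under composition. -/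
instance homeoGroup (X : Type*) [TopologicalSpace X] : Group (X ≃ₜ X) where
  mul f g := g.trans f
  one := Homeomorph.refl X
  inv := Homeomorph.symm
  mul_assoc f g h := rfl
  one_mul f := by ext x; rfl
  mul_one f := by ext x; rfl
  inv_mul_cancel f := by ext x; exact f.symm_apply_apply x

/-- If `X` is a metrizable topological space and `Γ` is a countable subgroup of the
homeomorphism group of `X`, then `X` admits a metric `δ` compatible with its topology
such that every element of `Γ` is a bi-Lipschitz homeomorphism of `(X, δ)`. -/
theorem countable_subgroup_biLipschitz {X : Type*} [TopologicalSpace X]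
    [TopologicalSpace.MetrizableSpace X] (Γ : Subgroup (X ≃ₜ X)) [Countable Γ] :
    ∃ δ : X → X → ℝ,
      (∀ x y : X, δ x y = 0 ↔ x = y) ∧
      (∀ x y : X, δ x y = δ y x) ∧
      (∀ x y z : X, δ x z ≤ δ x y + δ y z) ∧
      (∀ (x : X) (U : Set X), U ∈ nhds x ↔ ∃ ε > 0, {y : X | δ x y < ε} ⊆ U) ∧
      (∀ γ ∈ Γ, ∃ C ≥ (1:ℝ), ∀ x y : X,
        C⁻¹ * δ x y ≤ δ (γ x) (γ y) ∧ δ (γ x) (γ y) ≤ C * δ x y) := by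
  letI : MetricSpace X := TopologicalSpace.metrizableSpaceMetric X
  haveI : Nonempty Γ := ⟨1⟩
  obtain ⟨e, he⟩ := exists_surjective_nat Γ
  -- the "length" function
  set L : Γ → ℕ := fun γ => sInf {n | γ ∈ AAset e n} with hLdef
  have hLmem : ∀ γ : Γ, γ ∈ AAset e (L γ) := by
    intro γ
    obtain ⟨k, hk⟩ := he γ
    have hne : {n | γ ∈ AAset e n}.Nonempty :=
      ⟨k + 1, show γ ∈ AAset e (k + 1) from hk ▸ apply_mem_AAset e k⟩
    exact Nat.sInf_mem hne
  have hLle : ∀ (γ : Γ) (n : ℕ), γ ∈ AAset e n → L γ ≤ n := fun γ n h => Nat.sInf_le h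
  have hL1 : L 1 = 0 := Nat.le_zero.mp (hLle 1 0 (one_mem_AAset e 0))
  have hLmul : ∀ γ g : Γ, L (γ * g) ≤ L γ + L g := fun γ g =>
    hLle _ _ (AAset_mul e _ (hLmem γ) (hLmem g))
  -- the weights
  set c : Γ → ℝ := fun γ => (2 : ℝ) ^ (-(L γ : ℤ)) with hcdef
  have hc0 : ∀ γ, 0 < c γ := fun γ => zpow_pos (by norm_num) _
  have hc1 : ∀ γ, c γ ≤ 1 := by
    intro γ
    have h : (2:ℝ) ^ (-(L γ : ℤ)) ≤ 2 ^ (0:ℤ) :=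
      zpow_le_zpow_right₀ one_le_two (by simp)
    rw [zpow_zero] at h
    exact h
  have hcone : c 1 = 1 := by simp [hcdef, hL1]
  have hcmul : ∀ γ g : Γ, c γ ≤ 2 ^ (L g) * c (γ * g) := by
    intro γ g
    have h1 : (2:ℝ) ^ (L g) * c (γ * g) = 2 ^ ((L g : ℤ) + -(L (γ * g) : ℤ)) := by
      rw [zpow_add₀ (two_ne_zero), zpow_natCast]
    rw [h1, hcdef]
    refine zpow_le_zpow_right₀ one_le_two ?_
    have := hLmul γ g
    omega
  -- the bounded metric
  set md : X → X → ℝ := fun a b => min (dist a b) 1 with hmddef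
  have hmd0 : ∀ a b, 0 ≤ md a b := fun a b => le_min dist_nonneg one_pos.le
  have hmd1 : ∀ a b, md a b ≤ 1 := fun a b => min_le_right _ _
  have hmdself : ∀ a, md a a = 0 := by intro a; simp [hmddef]
  have hmdeq : ∀ a b, md a b = 0 → a = b := by
    intro a b h
    rcases le_or_gt (dist a b) 1 with hle | hlt
    · rw [hmddef] at h; simp only at h
      rw [min_eq_left hle] at h
      exact dist_le_zero.mp h.le
    · exfalso
      rw [hmddef] at h; simp only at h
      rw [min_eq_right hlt.le] at h
      norm_num at h
  have hmdsymm : ∀ a b, md a b = md b a := by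
    intro a b; simp [hmddef, dist_comm]
  have hmdtri : ∀ a b d : X, md a d ≤ md a b + md b d := by
    intro a b d
    rcases le_or_gt 1 (dist a b) with h1 | h1
    · calc md a d ≤ 1 := hmd1 _ _
        _ = min (dist a b) 1 + 0 := by rw [min_eq_right h1]; ring
        _ ≤ md a b + md b d := by exact add_le_add le_rfl (hmd0 _ _)
    rcases le_or_gt 1 (dist b d) with h2 | h2
    · calc md a d ≤ 1 := hmd1 _ _
        _ = 0 + min (dist b d) 1 := by rw [min_eq_right h2]; ring
        _ ≤ md a b + md b d := add_le_add (hmd0 _ _) le_rfl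
    · calc md a d ≤ dist a d := min_le_left _ _
        _ ≤ dist a b + dist b d := dist_triangle a b d
        _ = min (dist a b) 1 + min (dist b d) 1 := by
            rw [min_eq_left h1.le, min_eq_left h2.le]
  -- the new metric
  set δ : X → X → ℝ := fun x y => ⨆ γ : Γ, c γ * md ((γ : X ≃ₜ X) x) ((γ : X ≃ₜ X) y)
    with hδdef
  have hbdd : ∀ x y : X, BddAbove (Set.range fun γ : Γ =>
      c γ * md ((γ : X ≃ₜ X) x) ((γ : X ≃ₜ X) y)) := by
    intro x y
    refine ⟨1, ?_⟩
    rintro - ⟨γ, rfl⟩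
    calc c γ * md _ _ ≤ 1 * 1 :=
      mul_le_mul (hc1 γ) (hmd1 _ _) (hmd0 _ _) zero_le_one
      _ = 1 := mul_one 1
  have hterm_le : ∀ (x y : X) (γ : Γ),
      c γ * md ((γ : X ≃ₜ X) x) ((γ : X ≃ₜ X) y) ≤ δ x y := by
    intro x y γ
    exact le_ciSup (hbdd x y) γ
  have hsup_le : ∀ {x y : X} {a : ℝ},
      (∀ γ : Γ, c γ * md ((γ : X ≃ₜ X) x) ((γ : X ≃ₜ X) y) ≤ a) → δ x y ≤ a := by
    intro x y a h
    exact ciSup_le h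
  have hmd_le_δ : ∀ x y, md x y ≤ δ x y := by
    intro x y
    have := hterm_le x y 1
    simpa [hcone] using this
  have hδ0 : ∀ x y, 0 ≤ δ x y := by
    intro x y
    exact le_trans (hmd0 x y) (hmd_le_δ x y)
  -- coercion fact
  have hcoe : ∀ (γ g : Γ) (x : X), ((γ * g : Γ) : X ≃ₜ X) x = (γ : X ≃ₜ X) ((g : X ≃ₜ X) x) :=
    fun γ g x => rfl
  -- key displacement bound
  have key : ∀ (g : Γ) (x y : X),
      δ ((g : X ≃ₜ X) x) ((g : X ≃ₜ X) y) ≤ 2 ^ (L g) * δ x y := by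
    intro g x y
    refine hsup_le ?_
    intro γ
    have h1 : c γ * md ((γ : X ≃ₜ X) ((g : X ≃ₜ X) x)) ((γ : X ≃ₜ X) ((g : X ≃ₜ X) y))
        ≤ (2 ^ (L g) * c (γ * g)) * md (((γ * g : Γ) : X ≃ₜ X) x) (((γ * g : Γ) : X ≃ₜ X) y) := by
      rw [hcoe]
      exact mul_le_mul_of_nonneg_right (hcmul γ g) (hmd0 _ _)
    refine h1.trans ?_
    rw [mul_assoc]
    exact mul_le_mul_of_nonneg_left (hterm_le x y (γ * g)) (by positivity)
  refine ⟨δ, ?_, ?_, ?_, ?_, ?_⟩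
  · -- δ = 0 ↔ eq
    intro x y
    constructor
    · intro h
      exact hmdeq x y (le_antisymm (h ▸ hmd_le_δ x y) (hmd0 x y))
    · rintro rfl
      refine le_antisymm (hsup_le ?_) (hδ0 x x)
      intro γ
      rw [hmdself]
      simp
  · -- symm
    intro x y
    exact iSup_congr fun γ => by rw [hmdsymm]
  · -- triangle
    intro x y z
    refine hsup_le ?_
    intro γ
    calc c γ * md ((γ : X ≃ₜ X) x) ((γ : X ≃ₜ X) z)
        ≤ c γ * (md ((γ : X ≃ₜ X) x) ((γ : X ≃ₜ X) y) + md ((γ : X ≃ₜ X) y) ((γ : X ≃ₜ X) z)) :=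
          mul_le_mul_of_nonneg_left (hmdtri _ _ _) (hc0 γ).le
      _ = c γ * md ((γ : X ≃ₜ X) x) ((γ : X ≃ₜ X) y)
          + c γ * md ((γ : X ≃ₜ X) y) ((γ : X ≃ₜ X) z) := by ring
      _ ≤ δ x y + δ y z := add_le_add (hterm_le x y γ) (hterm_le y z γ)
  · -- compatibility
    intro x U
    constructor
    · intro hU
      obtain ⟨ε, hε, hball⟩ := Metric.mem_nhds_iff.mp hU
      refine ⟨min ε 1, lt_min hε one_pos, ?_⟩
      intro y hy
      simp only [Set.mem_setOf_eq] at hy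
      have h1 : md x y < min ε 1 := lt_of_le_of_lt (hmd_le_δ x y) hy
      have h2 : dist x y < ε := by
        rcases le_or_gt 1 (dist x y) with h | h
        · exfalso
          rw [hmddef] at h1; simp only at h1
          rw [min_eq_right h] at h1
          have := min_le_right ε 1
          linarith
        · rw [hmddef] at h1; simp only at h1
          rw [min_eq_left h.le] at h1
          exact lt_of_lt_of_le h1 (min_le_left ε 1)
      exact hball (Metric.mem_ball.mpr (by rwa [dist_comm]))
    · rintro ⟨ε, hε, hsub⟩
      -- finite set of relevant group elements
      obtain ⟨n, hn⟩ := exists_pow_lt_of_lt_one (half_pos hε) (by norm_num : (1:ℝ)/2 < 1)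
      have heq2 : ∀ m : ℕ, ((1:ℝ)/2) ^ m = (2:ℝ) ^ (-(m:ℤ)) := by
        intro m
        rw [one_div, inv_pow, ← zpow_natCast, ← zpow_neg]
      have hFsub : {γ : Γ | ε / 2 < c γ} ⊆ AAset e n := by
        intro γ hγ
        simp only [Set.mem_setOf_eq] at hγ
        have h3 : (2:ℝ) ^ (-(n:ℤ)) < 2 ^ (-(L γ : ℤ)) := by
          rw [← heq2]
          exact lt_trans hn hγ
        have h4 : L γ ≤ n := by
          by_contra hcon
          push_neg at hcon
          have : -(L γ : ℤ) ≤ -(n : ℤ) := by omega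
          exact absurd (zpow_le_zpow_right₀ one_le_two this) (not_le.mpr h3)
        exact AAset_mono e h4 (hLmem γ)
      have hF : {γ : Γ | ε / 2 < c γ}.Finite := (AAset_finite e n).subset hFsub
      set V : Set X := ⋂ γ ∈ {γ : Γ | ε / 2 < c γ},
        (γ : X ≃ₜ X) ⁻¹' Metric.ball ((γ : X ≃ₜ X) x) (ε / 2) with hVdef
      have hVmem : V ∈ nhds x := by
        refine (Filter.biInter_mem hF).mpr ?_
        intro γ _
        exact (γ : X ≃ₜ X).continuous.continuousAt.preimage_mem_nhds
          (Metric.ball_mem_nhds _ (half_pos hε))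
      refine Filter.mem_of_superset hVmem ?_
      intro y hy
      refine hsub ?_
      show δ x y < ε
      have hδle : δ x y ≤ ε / 2 := by
        refine hsup_le ?_
        intro γ
        rcases le_or_gt (c γ) (ε / 2) with hcle | hclt
        · calc c γ * md ((γ : X ≃ₜ X) x) ((γ : X ≃ₜ X) y) ≤ c γ * 1 :=
            mul_le_mul_of_nonneg_left (hmd1 _ _) (hc0 γ).le
            _ = c γ := mul_one _
            _ ≤ ε / 2 := hcle
        · have hyγ : (γ : X ≃ₜ X) y ∈ Metric.ball ((γ : X ≃ₜ X) x) (ε / 2) := by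
            have := Set.mem_iInter₂.mp hy γ hclt
            exact this
          have hdist : dist ((γ : X ≃ₜ X) x) ((γ : X ≃ₜ X) y) < ε / 2 := by
            rw [dist_comm]
            exact Metric.mem_ball.mp hyγ
          calc c γ * md ((γ : X ≃ₜ X) x) ((γ : X ≃ₜ X) y)
              ≤ 1 * md ((γ : X ≃ₜ X) x) ((γ : X ≃ₜ X) y) :=
                mul_le_mul_of_nonneg_right (hc1 γ) (hmd0 _ _)
            _ = md ((γ : X ≃ₜ X) x) ((γ : X ≃ₜ X) y) := one_mul _
            _ ≤ dist ((γ : X ≃ₜ X) x) ((γ : X ≃ₜ X) y) := min_le_left _ _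
            _ ≤ ε / 2 := hdist.le
      linarith
  · -- bi-Lipschitz
    intro g hg
    set G' : Γ := ⟨g, hg⟩ with hG'def
    refine ⟨2 ^ (L G') * 2 ^ (L G'⁻¹), ?_, ?_⟩
    · calc (1:ℝ) = 1 * 1 := (mul_one 1).symm
        _ ≤ 2 ^ (L G') * 2 ^ (L G'⁻¹) :=
          mul_le_mul (one_le_pow₀ one_le_two) (one_le_pow₀ one_le_two) zero_le_one
            (by positivity)
    · intro x y
      have hup : δ (g x) (g y) ≤ 2 ^ (L G') * δ x y := key G' x y
      have hdown : δ x y ≤ 2 ^ (L G'⁻¹) * δ (g x) (g y) := by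
        have h1 := key G'⁻¹ (g x) (g y)
        have h3 : ((G'⁻¹ : Γ) : X ≃ₜ X) (g x) = x := by
          show ((G'⁻¹ * G' : Γ) : X ≃ₜ X) x = x
          rw [inv_mul_cancel]
          rfl
        have h4 : ((G'⁻¹ : Γ) : X ≃ₜ X) (g y) = y := by
          show ((G'⁻¹ * G' : Γ) : X ≃ₜ X) y = y
          rw [inv_mul_cancel]
          rfl
        rwa [h3, h4] at h1
      constructor
      · rw [inv_mul_le_iff₀ (by positivity)]
        calc δ x y ≤ 2 ^ (L G'⁻¹) * δ (g x) (g y) := hdown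
          _ ≤ (2 ^ (L G') * 2 ^ (L G'⁻¹)) * δ (g x) (g y) := by
            have h5 : (2:ℝ) ^ (L G'⁻¹) ≤ 2 ^ (L G') * 2 ^ (L G'⁻¹) := by
              nlinarith [one_le_pow₀ (one_le_two (α := ℝ)) (n := L G'),
                pow_pos (two_pos (α := ℝ)) (L G'⁻¹)]
            exact mul_le_mul_of_nonneg_right h5 (hδ0 _ _)
      · calc δ (g x) (g y) ≤ 2 ^ (L G') * δ x y := hup
          _ ≤ (2 ^ (L G') * 2 ^ (L G'⁻¹)) * δ x y := by
            have h5 : (2:ℝ) ^ (L G') ≤ 2 ^ (L G') * 2 ^ (L G'⁻¹) := by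
              nlinarith [one_le_pow₀ (one_le_two (α := ℝ)) (n := L G'⁻¹),
                pow_pos (two_pos (α := ℝ)) (L G')]
            exact mul_le_mul_of_nonneg_right h5 (hδ0 _ _)
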